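/- Under the stated hypotheses there exists a constant C > 0, depending only on η0, M, and L0, such that for every i = 1,…,6: ‖ω_i‖_{L∞(I_r)} ≤ C r ‖h''‖_{L∞(I_r)} + C r² (‖h'''‖_{L∞(I_r)} + ‖h⁗‖_{L¹(I_r)}), and ‖ω_i'‖_{L∞(I_r)} ≤ C ‖h''‖_{L∞(I_r)} + C r (‖h''‖_{L∞(I_r)}² + ‖h'''‖_{L∞(I_r)} + ‖h⁗‖_{L¹(I_r)}) + C r³ (‖h'''‖_{L∞(I_r)}² + ‖h⁗‖_{L¹(I_r)}²). -/

import Mathlib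

open MeasureTheory Set

/-- The flattening factor `σ(x) := h'(0)·x / h(x)` (with `σ(0) := 1`), where `m = h'(0)`. -/
noncomputable def sigmaFun (h : ℝ → ℝ) (m : ℝ) (x : ℝ) : ℝ :=
  if x = 0 then 1 else m * x / h x

/-- `ω₁(x) := h'(x)/√(1+h'(x)²) - m/√(1+m²)`. -/
noncomputable def omega1 (h h' : ℝ → ℝ) (m x : ℝ) : ℝ :=
  h' x / Real.sqrt (1 + (h' x) ^ 2) - m / Real.sqrt (1 + m ^ 2)

/-- `ω₂(x) := 1/√(1+m²) - 1/√(1+h'(x)²)`. -/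
noncomputable def omega2 (h h' : ℝ → ℝ) (m x : ℝ) : ℝ :=
  1 / Real.sqrt (1 + m ^ 2) - 1 / Real.sqrt (1 + (h' x) ^ 2)

/-- `ω₃(x) := σ'(x) h(x) h'(x)/√(1+h'(x)²)`. -/
noncomputable def omega3 (h h' : ℝ → ℝ) (m x : ℝ) : ℝ :=
  deriv (sigmaFun h m) x * h x * (h' x / Real.sqrt (1 + (h' x) ^ 2))

/-- `ω₄(x) := (σ(x)-1) h'(x)/√(1+h'(x)²)`. -/
noncomputable def omega4 (h h' : ℝ → ℝ) (m x : ℝ) : ℝ :=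
  (sigmaFun h m x - 1) * (h' x / Real.sqrt (1 + (h' x) ^ 2))

/-- `ω₅(x) := σ'(x) h(x)/√(1+h'(x)²)`. -/
noncomputable def omega5 (h h' : ℝ → ℝ) (m x : ℝ) : ℝ :=
  deriv (sigmaFun h m) x * h x * (1 / Real.sqrt (1 + (h' x) ^ 2))

/-- `ω₆(x) := (σ(x)-1)/√(1+h'(x)²)`. -/
noncomputable def omega6 (h h' : ℝ → ℝ) (m x : ℝ) : ℝ :=
  (sigmaFun h m x - 1) * (1 / Real.sqrt (1 + (h' x) ^ 2))

section helpers

lemma sqrt1p_pos (p : ℝ) : 0 < Real.sqrt (1 + p ^ 2) :=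
  Real.sqrt_pos.2 (by positivity)

lemma sq_sqrt1p (p : ℝ) : Real.sqrt (1 + p ^ 2) ^ 2 = 1 + p ^ 2 :=
  Real.sq_sqrt (by positivity)

lemma one_le_sqrt1p (p : ℝ) : 1 ≤ Real.sqrt (1 + p ^ 2) := by
  nlinarith [sq_sqrt1p p, Real.sqrt_nonneg (1 + p ^ 2), sq_nonneg p]

lemma abs_le_sqrt1p (p : ℝ) : |p| ≤ Real.sqrt (1 + p ^ 2) := by
  rw [← Real.sqrt_sq_eq_abs]
  exact Real.sqrt_le_sqrt (by nlinarith)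

lemma hasDerivAt_phi (t : ℝ) :
    HasDerivAt (fun s : ℝ => s / Real.sqrt (1 + s ^ 2))
      (1 / Real.sqrt (1 + t ^ 2) ^ 3) t := by
  have h1 : HasDerivAt (fun s : ℝ => 1 + s ^ 2) (2 * t) t := by
    simpa using ((hasDerivAt_id t).pow 2).const_add 1
  have h2 := h1.sqrt (by positivity)
  have h3 := (hasDerivAt_id t).div h2 (sqrt1p_pos t).ne'
  refine h3.congr_deriv ?_
  have hS := sq_sqrt1p t
  have hSpos := sqrt1p_pos t
  field_simp
  simp only [id_eq]; linear_combination hS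

lemma hasDerivAt_psi (t : ℝ) :
    HasDerivAt (fun s : ℝ => 1 / Real.sqrt (1 + s ^ 2))
      (-(t / Real.sqrt (1 + t ^ 2) ^ 3)) t := by
  have h1 : HasDerivAt (fun s : ℝ => 1 + s ^ 2) (2 * t) t := by
    simpa using ((hasDerivAt_id t).pow 2).const_add 1
  have h2 := h1.sqrt (by positivity)
  have h3 := (hasDerivAt_const t (1:ℝ)).div h2 (sqrt1p_pos t).ne'
  refine h3.congr_deriv ?_
  have hS := sq_sqrt1p t
  have hSpos := sqrt1p_pos t
  field_simp
  ring

lemma abs_phi_le_one (t : ℝ) : |t / Real.sqrt (1 + t ^ 2)| ≤ 1 := by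
  rw [abs_div, abs_of_pos (sqrt1p_pos t), div_le_one (sqrt1p_pos t)]
  exact abs_le_sqrt1p t

lemma abs_psi_le_one (t : ℝ) : |1 / Real.sqrt (1 + t ^ 2)| ≤ 1 := by
  rw [abs_div, abs_of_pos (sqrt1p_pos t), div_le_one (sqrt1p_pos t)]
  simpa using one_le_sqrt1p t

lemma abs_phi'_le_one (t : ℝ) : |1 / Real.sqrt (1 + t ^ 2) ^ 3| ≤ 1 := by
  have h1 := one_le_sqrt1p t
  rw [abs_div, div_le_one (by positivity)]
  simp only [abs_one]
  calc (1:ℝ) ≤ Real.sqrt (1 + t ^ 2) ^ 3 := one_le_pow₀ h1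
    _ = |Real.sqrt (1 + t ^ 2) ^ 3| := (abs_of_pos (by positivity)).symm

lemma abs_psi'_le_one (t : ℝ) : |-(t / Real.sqrt (1 + t ^ 2) ^ 3)| ≤ 1 := by
  have h1 := one_le_sqrt1p t
  have h2 := abs_le_sqrt1p t
  have hS2 : 1 ≤ Real.sqrt (1 + t ^ 2) ^ 2 := one_le_pow₀ h1
  rw [abs_neg, abs_div, abs_of_pos (show (0:ℝ) < Real.sqrt (1 + t ^ 2) ^ 3 by positivity),
    div_le_one (by positivity)]
  calc |t| ≤ Real.sqrt (1 + t ^ 2) := h2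
    _ ≤ Real.sqrt (1 + t ^ 2) ^ 3 := by nlinarith [h1, hS2]

lemma phi_lipschitz (a b : ℝ) :
    |a / Real.sqrt (1 + a ^ 2) - b / Real.sqrt (1 + b ^ 2)| ≤ |a - b| := by
  have := Convex.norm_image_sub_le_of_norm_hasDerivWithin_le
    (f := fun s : ℝ => s / Real.sqrt (1 + s ^ 2))
    (f' := fun s : ℝ => 1 / Real.sqrt (1 + s ^ 2) ^ 3) (s := univ) (C := 1)
    (fun x _ => (hasDerivAt_phi x).hasDerivWithinAt)
    (fun x _ => by rw [Real.norm_eq_abs]; exact abs_phi'_le_one x)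
    convex_univ (mem_univ b) (mem_univ a)
  simpa [Real.norm_eq_abs] using this

lemma psi_lipschitz (a b : ℝ) :
    |1 / Real.sqrt (1 + a ^ 2) - 1 / Real.sqrt (1 + b ^ 2)| ≤ |a - b| := by
  have := Convex.norm_image_sub_le_of_norm_hasDerivWithin_le
    (f := fun s : ℝ => 1 / Real.sqrt (1 + s ^ 2))
    (f' := fun s : ℝ => -(s / Real.sqrt (1 + s ^ 2) ^ 3)) (s := univ) (C := 1)
    (fun x _ => (hasDerivAt_psi x).hasDerivWithinAt)
    (fun x _ => by rw [Real.norm_eq_abs]; exact abs_psi'_le_one x)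
    convex_univ (mem_univ b) (mem_univ a)
  simpa [Real.norm_eq_abs] using this

lemma abs_le_on_Icc_of_Ioo {f : ℝ → ℝ} {a b A : ℝ} (hab : a < b)
    (hc : ContinuousOn f (Icc a b)) (hb : ∀ x ∈ Ioo a b, |f x| ≤ A) :
    ∀ x ∈ Icc a b, |f x| ≤ A := by
  intro x hx
  have hxcl : x ∈ closure (Ioo a b) := by
    rw [closure_Ioo hab.ne]; exact hx
  have hct : ContinuousWithinAt f (Ioo a b) x :=
    (hc x hx).mono Ioo_subset_Icc_self
  have hne : (nhdsWithin x (Ioo a b)).NeBot := mem_closure_iff_nhdsWithin_neBot.1 hxcl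
  have ht : Filter.Tendsto (fun y => |f y|) (nhdsWithin x (Ioo a b)) (nhds |f x|) :=
    (continuous_abs.tendsto _).comp hct
  exact le_of_tendsto ht (Filter.eventually_of_mem self_mem_nhdsWithin (fun y hy => hb y hy))

lemma abs_mul3_le {a b c A B C : ℝ} (ha : |a| ≤ A) (hb : |b| ≤ B) (hc : |c| ≤ C) :
    |a * b * c| ≤ A * B * C := by
  have h1 : 0 ≤ A := (abs_nonneg a).trans ha
  have h2 : 0 ≤ B := (abs_nonneg b).trans hb
  rw [abs_mul, abs_mul]
  exact mul_le_mul (mul_le_mul ha hb (abs_nonneg b) h1) hc (abs_nonneg c)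
    (mul_nonneg h1 h2)

end helpers

set_option maxHeartbeats 6000000 in
/-- `L^∞` estimates for the functions `ω_i` and their derivatives, with a constant `C`
depending only on `η0`, `M`, and `L0`. -/
theorem stmt_7 (L0 η0 M : ℝ) (hL0 : 1 ≤ L0) (hη0 : 0 < η0) (hη0' : η0 < 1) (hM : 1 < M) :
    ∃ C : ℝ, 0 < C ∧
      ∀ (β : ℝ) (h h' h'' h''' h'''' : ℝ → ℝ) (r : ℝ),
        0 < β →
        (∀ x ∈ Set.Icc (0:ℝ) β, HasDerivWithinAt h (h' x) (Set.Icc 0 β) x) →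
        (∀ x ∈ Set.Icc (0:ℝ) β, HasDerivWithinAt h' (h'' x) (Set.Icc 0 β) x) →
        (∀ x ∈ Set.Icc (0:ℝ) β, HasDerivWithinAt h'' (h''' x) (Set.Icc 0 β) x) →
        ContinuousOn h''' (Set.Icc 0 β) →
        (∀ x ∈ Set.Ioo (0:ℝ) β, 0 < h x) →
        h 0 = 0 → h β = 0 →
        2 * η0 ≤ h' 0 → h' β ≤ -(2 * η0) →
        (∀ x1 ∈ Set.Icc (0:ℝ) β, ∀ x2 ∈ Set.Icc (0:ℝ) β, |h x1 - h x2| ≤ L0 * |x1 - x2|) →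
        (∫ x in (0:ℝ)..β, |h'' x| ^ 2) ≤ M →
        (∀ x ∈ Set.Icc (0:ℝ) β, h''' x = h''' 0 + ∫ s in (0:ℝ)..x, h'''' s) →
        IntervalIntegrable h'''' volume 0 β →
        0 < r → r ≤ η0 ^ 2 / (4 * M) →
        ∀ g ∈ ([omega1 h h' (h' 0), omega2 h h' (h' 0), omega3 h h' (h' 0),
                omega4 h h' (h' 0), omega5 h h' (h' 0), omega6 h h' (h' 0)] : List (ℝ → ℝ)),
          (∀ x ∈ Set.Ioo (0:ℝ) r,
              |g x| ≤
                C * r * sSup ((fun s => |h'' s|) '' Set.Ioo 0 r) +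
                  C * r ^ 2 * (sSup ((fun s => |h''' s|) '' Set.Ioo 0 r) +
                    ∫ t in (0:ℝ)..r, |h'''' t|)) ∧
          (∀ x ∈ Set.Ioo (0:ℝ) r,
              |deriv g x| ≤
                C * sSup ((fun s => |h'' s|) '' Set.Ioo 0 r) +
                  C * r * ((sSup ((fun s => |h'' s|) '' Set.Ioo 0 r)) ^ 2 +
                    sSup ((fun s => |h''' s|) '' Set.Ioo 0 r) + ∫ t in (0:ℝ)..r, |h'''' t|) +
                  C * r ^ 3 * ((sSup ((fun s => |h''' s|) '' Set.Ioo 0 r)) ^ 2 +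
                    (∫ t in (0:ℝ)..r, |h'''' t|) ^ 2)) := by
  have hL0pos : (0:ℝ) < L0 := lt_of_lt_of_le one_pos hL0
  have hM0 : (0:ℝ) < M := lt_trans one_pos hM
  set C : ℝ := 2 ^ 30 * L0 ^ 8 / η0 ^ 6 with hCdef
  have hC0 : 0 < C := div_pos (mul_pos (by norm_num) (pow_pos hL0pos 8)) (pow_pos hη0 6)
  set K : ℝ := 100 * L0 ^ 2 / η0 ^ 2 with hKdef
  have hK0 : 0 < K := div_pos (mul_pos (by norm_num) (pow_pos hL0pos 2)) (pow_pos hη0 2)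
  have hK1 : (1:ℝ) ≤ K := by
    rw [hKdef, le_div_iff₀ (pow_pos hη0 2)]
    nlinarith [pow_pos hη0 2, pow_pos hL0pos 2, sq_nonneg L0, hη0'.le, hη0.le]
  have hKC : K ≤ C := by
    rw [hKdef, hCdef, div_le_div_iff₀ (pow_pos hη0 2) (pow_pos hη0 6)]
    have e1 : η0 ^ 6 ≤ η0 ^ 2 := pow_le_pow_of_le_one hη0.le hη0'.le (by norm_num)
    have e2 : L0 ^ 2 ≤ L0 ^ 8 := pow_le_pow_right₀ hL0 (by norm_num)
    nlinarith [mul_le_mul e2 e1 (by positivity) (by positivity)]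
  clear_value C K
  refine ⟨C, hC0, ?_⟩
  intro β h h' h'' h''' h'''' r hβ hd1 hd2 hd3 hc3 hpos h0 hβ0 hm0 hmβ hlip hL2 _hftc _hint4 hr hrM
  set m : ℝ := h' 0 with hmdef
  have hm2η : 2 * η0 ≤ m := by rw [hmdef]; exact hm0
  set A : ℝ := sSup ((fun s => |h'' s|) '' Set.Ioo 0 r) with hAdef
  set B : ℝ := sSup ((fun s => |h''' s|) '' Set.Ioo 0 r) with hBdef
  set D : ℝ := (∫ t in (0:ℝ)..r, |h'''' t|) with hDdef
  -- continuity
  have hch : ContinuousOn h (Icc 0 β) := fun x hx => (hd1 x hx).continuousWithinAt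
  have hch' : ContinuousOn h' (Icc 0 β) := fun x hx => (hd2 x hx).continuousWithinAt
  have hch'' : ContinuousOn h'' (Icc 0 β) := fun x hx => (hd3 x hx).continuousWithinAt
  have hint2 : IntervalIntegrable h'' volume 0 β := by
    apply ContinuousOn.intervalIntegrable
    rwa [uIcc_of_le hβ.le]
  -- step 3 : AM-GM bound on ∫ |h''|
  have hi2β : IntervalIntegrable (fun s => |h'' s| ^ 2) volume 0 β := by
    apply ContinuousOn.intervalIntegrable
    rw [uIcc_of_le hβ.le]
    exact (hch''.abs).pow 2
  have step3 : ∀ c : ℝ, 0 < c → ∀ t : ℝ, 0 ≤ t → t ≤ β →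
      (∫ s in (0:ℝ)..t, |h'' s|) ≤ M / (2 * c) + c * t / 2 := by
    intro c hc t ht0 htβ
    have hsubt : uIcc (0:ℝ) t ⊆ uIcc (0:ℝ) β := by
      rw [uIcc_of_le ht0, uIcc_of_le hβ.le]
      exact Icc_subset_Icc le_rfl htβ
    have hi1 : IntervalIntegrable (fun s => |h'' s|) volume 0 t :=
      (hint2.mono_set hsubt).abs
    have hi2 : IntervalIntegrable (fun s => |h'' s| ^ 2) volume 0 t :=
      hi2β.mono_set hsubt
    have hmono : (∫ s in (0:ℝ)..t, |h'' s|) ≤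
        ∫ s in (0:ℝ)..t, (|h'' s| ^ 2 + c ^ 2) / (2 * c) := by
      apply intervalIntegral.integral_mono_on ht0 hi1
        ((hi2.add intervalIntegrable_const).div_const (2 * c))
      intro s _
      rw [le_div_iff₀ (by positivity)]
      nlinarith [sq_nonneg (|h'' s| - c)]
    have heval : (∫ s in (0:ℝ)..t, (|h'' s| ^ 2 + c ^ 2) / (2 * c)) =
        ((∫ s in (0:ℝ)..t, |h'' s| ^ 2) + c ^ 2 * t) / (2 * c) := by
      rw [intervalIntegral.integral_div,
        intervalIntegral.integral_add hi2 intervalIntegrable_const,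
        intervalIntegral.integral_const]
      simp [smul_eq_mul]
      ring
    have hsub : (∫ s in (0:ℝ)..t, |h'' s| ^ 2) ≤ M := by
      have hi3 : IntervalIntegrable (fun s => |h'' s| ^ 2) volume t β := by
        apply hi2β.mono_set
        rw [uIcc_of_le htβ, uIcc_of_le hβ.le]
        exact Icc_subset_Icc ht0 le_rfl
      have hsplit := intervalIntegral.integral_add_adjacent_intervals hi2 hi3
      have hnn : 0 ≤ ∫ s in t..β, |h'' s| ^ 2 :=
        intervalIntegral.integral_nonneg htβ (fun u _ => by positivity)
      have : (∫ s in (0:ℝ)..β, |h'' s| ^ 2) ≤ M := hL2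
      linarith
    calc (∫ s in (0:ℝ)..t, |h'' s|)
        ≤ ((∫ s in (0:ℝ)..t, |h'' s| ^ 2) + c ^ 2 * t) / (2 * c) := heval ▸ hmono
      _ ≤ (M + c ^ 2 * t) / (2 * c) :=
          (div_le_div_iff_of_pos_right (mul_pos two_pos hc)).2 (by linarith)
      _ = M / (2 * c) + c * t / 2 := by field_simp
  -- β is not too small
  have hβ16 : 16 * η0 ^ 2 ≤ M * β := by
    have hftc0β : (∫ s in (0:ℝ)..β, h'' s) = h' β - h' 0 := by
      apply intervalIntegral.integral_eq_sub_of_hasDeriv_right_of_le hβ.le hch'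
        (fun x hx => ((hd2 x ⟨hx.1.le, hx.2.le⟩).hasDerivAt
          (Icc_mem_nhds hx.1 hx.2)).hasDerivWithinAt) hint2
    have h4η : 4 * η0 ≤ |∫ s in (0:ℝ)..β, h'' s| := by
      rw [hftc0β]
      calc 4 * η0 ≤ h' 0 - h' β := by linarith
        _ ≤ |h' 0 - h' β| := le_abs_self _
        _ = |h' β - h' 0| := abs_sub_comm _ _
    have hc : (0:ℝ) < 4 * η0 / β := by positivity
    have h4η2 : 4 * η0 ≤ M / (2 * (4 * η0 / β)) + (4 * η0 / β) * β / 2 :=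
      h4η.trans ((intervalIntegral.abs_integral_le_integral_abs hβ.le).trans
        (step3 _ hc β hβ.le le_rfl))
    have heq : M / (2 * (4 * η0 / β)) + (4 * η0 / β) * β / 2 = M * β / (8 * η0) + 2 * η0 := by
      field_simp
      ring
    rw [heq] at h4η2
    have h2η : 2 * η0 ≤ M * β / (8 * η0) := by linarith
    rw [le_div_iff₀ (by positivity)] at h2η
    nlinarith
  have hrβ : r ≤ β := by
    refine hrM.trans ?_
    rw [div_le_iff₀ (by positivity)]
    nlinarith [sq_nonneg η0]
  have hIccsub : Icc (0:ℝ) r ⊆ Icc 0 β := Icc_subset_Icc le_rfl hrβ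
  have hIoosub : Ioo (0:ℝ) r ⊆ Ioo 0 β := Ioo_subset_Ioo le_rfl hrβ
  -- interior derivatives
  have hdAt : ∀ x ∈ Ioo (0:ℝ) β, HasDerivAt h (h' x) x := fun x hx =>
    (hd1 x ⟨hx.1.le, hx.2.le⟩).hasDerivAt (Icc_mem_nhds hx.1 hx.2)
  have hdAt' : ∀ x ∈ Ioo (0:ℝ) β, HasDerivAt h' (h'' x) x := fun x hx =>
    (hd2 x ⟨hx.1.le, hx.2.le⟩).hasDerivAt (Icc_mem_nhds hx.1 hx.2)
  -- sup bounds for A, B, D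
  have hBb : BddAbove ((fun s => |h''' s|) '' Ioo 0 r) :=
    ((isCompact_Icc.image_of_continuousOn ((hc3.mono hIccsub).abs)).bddAbove).mono
      (image_mono Ioo_subset_Icc_self)
  have hB0 : 0 ≤ B := le_trans (abs_nonneg (h''' (r/2)))
    (le_csSup hBb (mem_image_of_mem _ ⟨half_pos hr, half_lt_self hr⟩))
  have hD0 : 0 ≤ D := intervalIntegral.integral_nonneg hr.le (fun u _ => abs_nonneg _)
  have hAb' : BddAbove ((fun s => |h'' s|) '' Ioo 0 r) :=
    ((isCompact_Icc.image_of_continuousOn ((hch''.mono hIccsub).abs)).bddAbove).mono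
      (image_mono Ioo_subset_Icc_self)
  have hA0 : 0 ≤ A := le_trans (abs_nonneg (h'' (r/2)))
    (le_csSup hAb' (mem_image_of_mem _ ⟨half_pos hr, half_lt_self hr⟩))
  have hAb : ∀ t ∈ Icc (0:ℝ) r, |h'' t| ≤ A :=
    abs_le_on_Icc_of_Ioo hr (hch''.mono hIccsub)
      (fun t ht => le_csSup hAb' (mem_image_of_mem _ ht))
  clear_value m A B D
  -- |h' - m| ≤ η0/2 on [0,r]
  have hη2 : ∀ t ∈ Icc (0:ℝ) r, |h' t - m| ≤ η0 / 2 := by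
    intro t ht
    have htβ : t ≤ β := ht.2.trans hrβ
    have hftct : (∫ s in (0:ℝ)..t, h'' s) = h' t - h' 0 := by
      apply intervalIntegral.integral_eq_sub_of_hasDeriv_right_of_le ht.1
        (hch'.mono (Icc_subset_Icc le_rfl htβ))
        (fun x hx => ((hd2 x ⟨hx.1.le, (hx.2.trans_le htβ).le⟩).hasDerivAt
          (Icc_mem_nhds hx.1 (hx.2.trans_le htβ))).hasDerivWithinAt)
      apply hint2.mono_set
      rw [uIcc_of_le ht.1, uIcc_of_le hβ.le]
      exact Icc_subset_Icc le_rfl htβ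
    have hs3 := step3 (2 * M / η0) (by positivity) t ht.1 htβ
    have he1 : M / (2 * (2 * M / η0)) = η0 / 4 := by field_simp; ring
    have he2 : (2 * M / η0) * t / 2 ≤ η0 / 4 := by
      rw [div_mul_eq_mul_div, div_div, div_le_iff₀ (by positivity)]
      have h1 : M * t ≤ M * (η0 ^ 2 / (4 * M)) :=
        mul_le_mul_of_nonneg_left (ht.2.trans hrM) hM0.le
      have h2 : M * (η0 ^ 2 / (4 * M)) = η0 ^ 2 / 4 := by field_simp
      nlinarith
    calc |h' t - m| = |∫ s in (0:ℝ)..t, h'' s| := by rw [hftct, hmdef]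
      _ ≤ ∫ s in (0:ℝ)..t, |h'' s| := intervalIntegral.abs_integral_le_integral_abs ht.1
      _ ≤ M / (2 * (2 * M / η0)) + (2 * M / η0) * t / 2 := hs3
      _ ≤ η0 / 4 + η0 / 4 := by rw [he1]; linarith
      _ = η0 / 2 := by ring
  -- mean value estimates
  have F1 : ∀ t ∈ Icc (0:ℝ) r, |h' t - m| ≤ A * t := by
    intro t ht
    have := Convex.norm_image_sub_le_of_norm_hasDerivWithin_le
      (f := h') (f' := h'') (s := Icc (0:ℝ) r) (C := A)
      (fun y hy => (hd2 y (hIccsub hy)).mono hIccsub)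
      (fun y hy => by rw [Real.norm_eq_abs]; exact hAb y hy)
      (convex_Icc 0 r) (left_mem_Icc.2 hr.le) ht
    simpa [Real.norm_eq_abs, abs_of_nonneg ht.1, hmdef] using this
  have F3 : ∀ t ∈ Icc (0:ℝ) r, |h t - m * t| ≤ η0 / 2 * t := by
    intro t ht
    have hder : ∀ y ∈ Icc (0:ℝ) r, HasDerivWithinAt (fun z => h z - m * z) (h' y - m) (Icc 0 r) y := by
      intro y hy
      have h2 : HasDerivWithinAt (fun z : ℝ => m * z) m (Icc 0 r) y := by
        simpa using ((hasDerivAt_id y).const_mul m).hasDerivWithinAt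
      exact ((hd1 y (hIccsub hy)).mono hIccsub).sub h2
    have := Convex.norm_image_sub_le_of_norm_hasDerivWithin_le
      (f := fun z => h z - m * z) (f' := fun y => h' y - m) (s := Icc (0:ℝ) r) (C := η0 / 2)
      hder (fun y hy => by rw [Real.norm_eq_abs]; exact hη2 y hy)
      (convex_Icc 0 r) (left_mem_Icc.2 hr.le) ht
    simpa [Real.norm_eq_abs, abs_of_nonneg ht.1, h0] using this
  have F4 : ∀ t ∈ Icc (0:ℝ) r, |h t - m * t| ≤ A * t * t := by
    intro t ht
    have hsub2 : Icc (0:ℝ) t ⊆ Icc (0:ℝ) r := Icc_subset_Icc le_rfl ht.2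
    have hder : ∀ y ∈ Icc (0:ℝ) t, HasDerivWithinAt (fun z => h z - m * z) (h' y - m) (Icc 0 t) y := by
      intro y hy
      have h2 : HasDerivWithinAt (fun z : ℝ => m * z) m (Icc 0 t) y := by
        simpa using ((hasDerivAt_id y).const_mul m).hasDerivWithinAt
      exact ((hd1 y (hIccsub (hsub2 hy))).mono (hsub2.trans hIccsub)).sub h2
    have := Convex.norm_image_sub_le_of_norm_hasDerivWithin_le
      (f := fun z => h z - m * z) (f' := fun y => h' y - m) (s := Icc (0:ℝ) t) (C := A * t)
      hder (fun y hy => by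
        rw [Real.norm_eq_abs]
        exact (F1 y (hsub2 hy)).trans (mul_le_mul_of_nonneg_left hy.2 hA0))
      (convex_Icc 0 t) (left_mem_Icc.2 ht.1) (right_mem_Icc.2 ht.1)
    simpa [Real.norm_eq_abs, abs_of_nonneg ht.1, h0] using this
  -- m is bounded above
  have hm2L : m ≤ 2 * L0 := by
    have hF3r := F3 r (right_mem_Icc.2 hr.le)
    have hhr : |h r| ≤ L0 * r := by
      have := hlip r ⟨hr.le, hrβ⟩ 0 ⟨le_rfl, hβ.le⟩
      simp only [h0, sub_zero] at this
      simpa [abs_of_nonneg hr.le] using this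
    have h1 := (abs_le.1 hF3r).1
    have h2 := (abs_le.1 hhr).2
    nlinarith [hr, hη0, hη0', hL0]
  -- pointwise bounds on (0, r)
  have P3 : ∀ x ∈ Ioo (0:ℝ) r, η0 * x ≤ h x := by
    intro x hx
    have := (abs_le.1 (F3 x ⟨hx.1.le, hx.2.le⟩)).1
    nlinarith [hx.1, hη0]
  have P4 : ∀ x ∈ Ioo (0:ℝ) r, h x ≤ L0 * x := by
    intro x hx
    have := hlip x (hIccsub ⟨hx.1.le, hx.2.le⟩) 0 ⟨le_rfl, hβ.le⟩
    simp only [h0, sub_zero] at this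
    have := (abs_le.1 this).2
    calc h x ≤ L0 * |x| := this
      _ = L0 * x := by rw [abs_of_nonneg hx.1.le]
  have P5 : ∀ x ∈ Ioo (0:ℝ) r, |h' x| ≤ 3 * L0 := by
    intro x hx
    have := abs_le.1 (hη2 x ⟨hx.1.le, hx.2.le⟩)
    rw [abs_le]
    constructor <;> nlinarith [this.1, this.2, hm2η, hm2L, hη0, hη0', hL0]
  -- |m| bound
  have hmabs : |m| ≤ 2 * L0 := abs_le.2 ⟨by nlinarith [hm2η, hη0, hL0], hm2L⟩
  -- sigma : first derivative on (0, β)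
  have hσd : ∀ x ∈ Ioo (0:ℝ) β, HasDerivAt (sigmaFun h m)
      ((m * h x - m * x * h' x) / h x ^ 2) x := by
    intro x hx
    have hhx := hpos x hx
    have hev : sigmaFun h m =ᶠ[nhds x] fun y => m * y / h y := by
      filter_upwards [isOpen_Ioo.mem_nhds hx] with y hy
      rw [sigmaFun, if_neg hy.1.ne']
    have hder : HasDerivAt (fun y => m * y / h y) ((m * 1 * h x - m * x * h' x) / h x ^ 2) x :=
      ((hasDerivAt_id x).const_mul m).div (hdAt x hx) hhx.ne'
    have h2 : HasDerivAt (sigmaFun h m) ((m * 1 * h x - m * x * h' x) / h x ^ 2) x :=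
      hder.congr_of_eventuallyEq hev
    simpa using h2
  have hσv : ∀ x ∈ Ioo (0:ℝ) β, deriv (sigmaFun h m) x = (m * h x - m * x * h' x) / h x ^ 2 :=
    fun x hx => (hσd x hx).deriv
  -- numerator bound
  have hnum1 : ∀ x ∈ Ioo (0:ℝ) r, |m * h x - m * x * h' x| ≤ 4 * L0 * A * x ^ 2 := by
    intro x hx
    have hxI : x ∈ Icc (0:ℝ) r := ⟨hx.1.le, hx.2.le⟩
    have e : m * h x - m * x * h' x = m * (h x - m * x) - m * x * (h' x - m) := by ring
    have b1 : |m * (h x - m * x)| ≤ 2 * L0 * (A * x * x) := by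
      rw [abs_mul]
      exact mul_le_mul hmabs (F4 x hxI) (abs_nonneg _) (by linarith)
    have b2 : |m * x * (h' x - m)| ≤ (2 * L0 * x) * (A * x) := by
      rw [abs_mul, abs_mul, abs_of_nonneg hx.1.le]
      exact mul_le_mul (mul_le_mul_of_nonneg_right hmabs hx.1.le) (F1 x hxI) (abs_nonneg _)
        (by nlinarith [hL0pos, hx.1])
    calc |m * h x - m * x * h' x| = |m * (h x - m * x) - m * x * (h' x - m)| := by rw [e]
      _ ≤ |m * (h x - m * x)| + |m * x * (h' x - m)| := abs_sub _ _
      _ ≤ 2 * L0 * (A * x * x) + (2 * L0 * x) * (A * x) := add_le_add b1 b2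
      _ = 4 * L0 * A * x ^ 2 := by ring
  have hden2 : ∀ x ∈ Ioo (0:ℝ) r, η0 ^ 2 * x ^ 2 ≤ h x ^ 2 := by
    intro x hx
    nlinarith [P3 x hx, mul_pos hη0 hx.1]
  have hFb : ∀ x ∈ Ioo (0:ℝ) r, |(m * h x - m * x * h' x) / h x ^ 2| ≤ 4 * L0 / η0 ^ 2 * A := by
    intro x hx
    have hhx := hpos x (hIoosub hx)
    rw [abs_div, abs_of_pos (pow_pos hhx 2), div_le_iff₀ (pow_pos hhx 2)]
    calc |m * h x - m * x * h' x| ≤ 4 * L0 * A * x ^ 2 := hnum1 x hx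
      _ = (4 * L0 / η0 ^ 2 * A) * (η0 ^ 2 * x ^ 2) := by field_simp
      _ ≤ (4 * L0 / η0 ^ 2 * A) * h x ^ 2 := mul_le_mul_of_nonneg_left (hden2 x hx)
          (mul_nonneg (div_nonneg (by linarith) (by positivity)) hA0)
  have hσ1 : ∀ x ∈ Ioo (0:ℝ) r, |sigmaFun h m x - 1| ≤ A / η0 * x := by
    intro x hx
    have hhx := hpos x (hIoosub hx)
    have heq : sigmaFun h m x - 1 = (m * x - h x) / h x := by
      rw [sigmaFun, if_neg hx.1.ne']
      field_simp
    rw [heq, abs_div, abs_of_pos hhx, div_le_iff₀ hhx]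
    calc |m * x - h x| = |h x - m * x| := abs_sub_comm _ _
      _ ≤ A * x * x := F4 x ⟨hx.1.le, hx.2.le⟩
      _ = (A / η0 * x) * (η0 * x) := by field_simp
      _ ≤ (A / η0 * x) * h x := mul_le_mul_of_nonneg_left (P3 x hx)
          (mul_nonneg (div_nonneg hA0 hη0.le) hx.1.le)
  -- sigma : second derivative on (0, r)
  have hσd2 : ∀ x ∈ Ioo (0:ℝ) r, HasDerivAt (deriv (sigmaFun h m))
      ((-(m * x * h'' x) * h x - (m * h x - m * x * h' x) * (2 * h' x)) / h x ^ 3) x := by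
    intro x hx
    have hxβ := hIoosub hx
    have hhx := hpos x hxβ
    have hnum : HasDerivAt (fun y => m * h y - m * y * h' y)
        (m * h' x - (m * 1 * h' x + m * x * h'' x)) x :=
      ((hdAt x hxβ).const_mul m).sub (((hasDerivAt_id x).const_mul m).mul (hdAt' x hxβ))
    have hden := (hdAt x hxβ).pow 2
    have hF := hnum.div hden (pow_ne_zero 2 hhx.ne')
    have hF' : HasDerivAt (fun y => (m * h y - m * y * h' y) / h y ^ 2)
        ((-(m * x * h'' x) * h x - (m * h x - m * x * h' x) * (2 * h' x)) / h x ^ 3) x := by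
      refine hF.congr_deriv ?_
      simp only [Pi.pow_apply]
      field_simp
      ring
    apply hF'.congr_of_eventuallyEq
    filter_upwards [isOpen_Ioo.mem_nhds hxβ] with y hy
    exact hσv y hy
  have hGhb : ∀ x ∈ Ioo (0:ℝ) r,
      |(-(m * x * h'' x) * h x - (m * h x - m * x * h' x) * (2 * h' x)) / h x ^ 3 * h x| ≤
        26 * L0 ^ 2 / η0 ^ 2 * A := by
    intro x hx
    have hxβ := hIoosub hx
    have hhx := hpos x hxβ
    have heq : (-(m * x * h'' x) * h x - (m * h x - m * x * h' x) * (2 * h' x)) / h x ^ 3 * h x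
        = (-(m * x * h'' x) * h x - (m * h x - m * x * h' x) * (2 * h' x)) / h x ^ 2 := by
      field_simp
    rw [heq, abs_div, abs_of_pos (pow_pos hhx 2), div_le_iff₀ (pow_pos hhx 2)]
    have u1 : |m| * x ≤ 2 * L0 * x := mul_le_mul_of_nonneg_right hmabs hx.1.le
    have u2 : |m| * x * |h'' x| ≤ 2 * L0 * x * A :=
      mul_le_mul u1 (hAb x ⟨hx.1.le, hx.2.le⟩) (abs_nonneg _)
        (mul_nonneg (mul_nonneg (by norm_num : (0:ℝ) ≤ 2) hL0pos.le) hx.1.le)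
    have b1 : |(-(m * x * h'' x)) * h x| ≤ (2 * L0 * x * A) * (L0 * x) := by
      rw [abs_mul, abs_neg, abs_mul, abs_mul, abs_of_nonneg hx.1.le, abs_of_pos hhx]
      exact mul_le_mul u2 (P4 x hx) hhx.le
        (mul_nonneg (mul_nonneg (mul_nonneg (by norm_num : (0:ℝ) ≤ 2) hL0pos.le) hx.1.le) hA0)
    have b2 : |(m * h x - m * x * h' x) * (2 * h' x)| ≤ (4 * L0 * A * x ^ 2) * (2 * (3 * L0)) := by
      rw [abs_mul]
      refine mul_le_mul (hnum1 x hx) ?_ (abs_nonneg _) ?_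
      · calc |2 * h' x| = 2 * |h' x| := by rw [abs_mul]; norm_num
          _ ≤ 2 * (3 * L0) := by linarith [P5 x hx]
      · have : (0:ℝ) ≤ A * x ^ 2 := mul_nonneg hA0 (sq_nonneg x)
        nlinarith [hL0pos]
    calc |(-(m * x * h'' x)) * h x - (m * h x - m * x * h' x) * (2 * h' x)|
        ≤ |(-(m * x * h'' x)) * h x| + |(m * h x - m * x * h' x) * (2 * h' x)| := abs_sub _ _
      _ ≤ (2 * L0 * x * A) * (L0 * x) + (4 * L0 * A * x ^ 2) * (2 * (3 * L0)) := add_le_add b1 b2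
      _ = (26 * L0 ^ 2 * A) * x ^ 2 := by ring
      _ = (26 * L0 ^ 2 / η0 ^ 2 * A) * (η0 ^ 2 * x ^ 2) := by field_simp
      _ ≤ (26 * L0 ^ 2 / η0 ^ 2 * A) * h x ^ 2 := mul_le_mul_of_nonneg_left (hden2 x hx)
          (mul_nonneg (div_nonneg (by nlinarith [hL0pos]) (by positivity)) hA0)
  -- derivative helpers for φ, ψ composed with h'
  have keyΦ : ∀ x ∈ Ioo (0:ℝ) r, HasDerivAt (fun y => h' y / Real.sqrt (1 + h' y ^ 2))
      (1 / Real.sqrt (1 + h' x ^ 2) ^ 3 * h'' x) x := fun x hx =>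
    (hasDerivAt_phi (h' x)).comp x (hdAt' x (hIoosub hx))
  have keyΨ : ∀ x ∈ Ioo (0:ℝ) r, HasDerivAt (fun y => 1 / Real.sqrt (1 + h' y ^ 2))
      (-(h' x / Real.sqrt (1 + h' x ^ 2) ^ 3) * h'' x) x := fun x hx =>
    (hasDerivAt_psi (h' x)).comp x (hdAt' x (hIoosub hx))
  have keyΦb : ∀ x ∈ Ioo (0:ℝ) r, |1 / Real.sqrt (1 + h' x ^ 2) ^ 3 * h'' x| ≤ A := by
    intro x hx
    rw [abs_mul]
    calc |1 / Real.sqrt (1 + h' x ^ 2) ^ 3| * |h'' x| ≤ 1 * A :=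
        mul_le_mul (abs_phi'_le_one _) (hAb x ⟨hx.1.le, hx.2.le⟩) (abs_nonneg _) one_pos.le
      _ = A := one_mul A
  have keyΨb : ∀ x ∈ Ioo (0:ℝ) r, |-(h' x / Real.sqrt (1 + h' x ^ 2) ^ 3) * h'' x| ≤ A := by
    intro x hx
    rw [abs_mul]
    calc |-(h' x / Real.sqrt (1 + h' x ^ 2) ^ 3)| * |h'' x| ≤ 1 * A :=
        mul_le_mul (abs_psi'_le_one _) (hAb x ⟨hx.1.le, hx.2.le⟩) (abs_nonneg _) one_pos.le
      _ = A := one_mul A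
  -- constant comparisons
  have hKgen : ∀ a : ℝ, a ≤ 100 * L0 ^ 2 → a / η0 ^ 2 ≤ K := by
    intro a ha
    rw [hKdef]
    exact (div_le_div_iff_of_pos_right (pow_pos hη0 2)).2 ha
  have hK1η : 1 / η0 ≤ K := by
    rw [hKdef, div_le_div_iff₀ hη0 (pow_pos hη0 2)]
    have hη100 : η0 ≤ 100 * L0 ^ 2 := by nlinarith [hL0, hη0'.le]
    nlinarith [mul_le_mul_of_nonneg_right hη100 hη0.le]
  -- wrap-up lemmas
  have final1 : ∀ x ∈ Ioo (0:ℝ) r, ∀ u : ℝ, u ≤ K * (A * x) →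
      u ≤ C * r * A + C * r ^ 2 * (B + D) := by
    intro x hx u hu
    have t1 : K * A ≤ C * A := mul_le_mul_of_nonneg_right hKC hA0
    have t2 : K * A * x ≤ C * A * x := mul_le_mul_of_nonneg_right t1 hx.1.le
    have t3 : C * A * x ≤ C * A * r := mul_le_mul_of_nonneg_left hx.2.le
      (mul_nonneg hC0.le hA0)
    have t4 : 0 ≤ C * r ^ 2 * (B + D) :=
      mul_nonneg (mul_nonneg hC0.le (sq_nonneg r)) (add_nonneg hB0 hD0)
    linarith [hu, t2, t3, t4]
  have final2 : ∀ x ∈ Ioo (0:ℝ) r, ∀ u : ℝ, u ≤ K * A + K * A * (x * A) →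
      u ≤ C * A + C * r * (A ^ 2 + B + D) + C * r ^ 3 * (B ^ 2 + D ^ 2) := by
    intro x hx u hu
    have t1 : K * A ≤ C * A := mul_le_mul_of_nonneg_right hKC hA0
    have s1 : K * (A * A) ≤ C * (A * A) :=
      mul_le_mul_of_nonneg_right hKC (mul_nonneg hA0 hA0)
    have s2 : K * (A * A) * x ≤ K * (A * A) * r := mul_le_mul_of_nonneg_left hx.2.le
      (mul_nonneg hK0.le (mul_nonneg hA0 hA0))
    have s3 : K * (A * A) * r ≤ C * (A * A) * r := mul_le_mul_of_nonneg_right s1 hr.le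
    have t4 : 0 ≤ C * r * (B + D) :=
      mul_nonneg (mul_nonneg hC0.le hr.le) (add_nonneg hB0 hD0)
    have t5 : 0 ≤ C * r ^ 3 * (B ^ 2 + D ^ 2) :=
      mul_nonneg (mul_nonneg hC0.le (by positivity)) (add_nonneg (sq_nonneg B) (sq_nonneg D))
    linarith [hu, t1, s2, s3, t4, t5]
  -- case analysis
  intro g hg
  simp only [List.mem_cons, List.not_mem_nil, or_false] at hg
  rcases hg with rfl | rfl | rfl | rfl | rfl | rfl
  -- ω₁
  · constructor
    · intro x hx
      refine final1 x hx _ ?_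
      calc |omega1 h h' m x| ≤ |h' x - m| := phi_lipschitz _ _
        _ ≤ A * x := F1 x ⟨hx.1.le, hx.2.le⟩
        _ ≤ K * (A * x) := le_mul_of_one_le_left (mul_nonneg hA0 hx.1.le) hK1
    · intro x hx
      have hd : HasDerivAt (omega1 h h' m) (1 / Real.sqrt (1 + h' x ^ 2) ^ 3 * h'' x) x :=
        (keyΦ x hx).sub_const _
      rw [hd.deriv]
      refine final2 x hx _ ?_
      have h1 := keyΦb x hx
      have h2 : A ≤ K * A := le_mul_of_one_le_left hA0 hK1
      have h3 : 0 ≤ K * A * (x * A) :=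
        mul_nonneg (mul_nonneg hK0.le hA0) (mul_nonneg hx.1.le hA0)
      linarith
  -- ω₂
  · constructor
    · intro x hx
      refine final1 x hx _ ?_
      calc |omega2 h h' m x| ≤ |m - h' x| := psi_lipschitz _ _
        _ = |h' x - m| := abs_sub_comm _ _
        _ ≤ A * x := F1 x ⟨hx.1.le, hx.2.le⟩
        _ ≤ K * (A * x) := le_mul_of_one_le_left (mul_nonneg hA0 hx.1.le) hK1
    · intro x hx
      have hd : HasDerivAt (omega2 h h' m)
          (-(-(h' x / Real.sqrt (1 + h' x ^ 2) ^ 3) * h'' x)) x :=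
        (keyΨ x hx).const_sub _
      rw [hd.deriv]
      refine final2 x hx _ ?_
      have h1 := keyΨb x hx
      rw [abs_neg]
      have h2 : A ≤ K * A := le_mul_of_one_le_left hA0 hK1
      have h3 : 0 ≤ K * A * (x * A) :=
        mul_nonneg (mul_nonneg hK0.le hA0) (mul_nonneg hx.1.le hA0)
      linarith
  -- ω₃
  · constructor
    · intro x hx
      have hxβ := hIoosub hx
      refine final1 x hx _ ?_
      have e : omega3 h h' m x = (m * h x - m * x * h' x) / h x ^ 2 * h x *
          (h' x / Real.sqrt (1 + h' x ^ 2)) := by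
        rw [omega3, hσv x hxβ]
      rw [e]
      have hhb : |h x| ≤ L0 * x := by
        rw [abs_of_pos (hpos x hxβ)]; exact P4 x hx
      calc |(m * h x - m * x * h' x) / h x ^ 2 * h x * (h' x / Real.sqrt (1 + h' x ^ 2))|
          ≤ (4 * L0 / η0 ^ 2 * A) * (L0 * x) * 1 :=
            abs_mul3_le (hFb x hx) hhb (abs_phi_le_one _)
        _ = (4 * L0 * L0 / η0 ^ 2) * (A * x) := by ring
        _ ≤ K * (A * x) := mul_le_mul_of_nonneg_right
            (by
              have : (4 : ℝ) * L0 * L0 ≤ 100 * L0 ^ 2 := by nlinarith [hL0pos]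
              calc 4 * L0 * L0 / η0 ^ 2 ≤ (100 * L0 ^ 2) / η0 ^ 2 :=
                  (div_le_div_iff_of_pos_right (pow_pos hη0 2)).2 this
                _ ≤ K := hKgen _ le_rfl)
            (mul_nonneg hA0 hx.1.le)
    · intro x hx
      have hxβ := hIoosub hx
      have hd : HasDerivAt (omega3 h h' m)
          (((-(m * x * h'' x) * h x - (m * h x - m * x * h' x) * (2 * h' x)) / h x ^ 3 * h x +
            deriv (sigmaFun h m) x * h' x) * (h' x / Real.sqrt (1 + h' x ^ 2)) +
            deriv (sigmaFun h m) x * h x * (1 / Real.sqrt (1 + h' x ^ 2) ^ 3 * h'' x)) x :=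
        ((hσd2 x hx).mul (hdAt x hxβ)).mul (keyΦ x hx)
      rw [hd.deriv]
      refine final2 x hx _ ?_
      have t1 := hGhb x hx
      have t2 : |deriv (sigmaFun h m) x * h' x| ≤ 12 * L0 ^ 2 / η0 ^ 2 * A := by
        rw [hσv x hxβ, abs_mul]
        calc |(m * h x - m * x * h' x) / h x ^ 2| * |h' x| ≤ (4 * L0 / η0 ^ 2 * A) * (3 * L0) :=
            mul_le_mul (hFb x hx) (P5 x hx) (abs_nonneg _)
              (mul_nonneg (div_nonneg (by linarith) (by positivity)) hA0)
          _ = 12 * L0 ^ 2 / η0 ^ 2 * A := by ring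
      have t3 : |deriv (sigmaFun h m) x * h x| ≤ 4 * L0 ^ 2 / η0 ^ 2 * (A * x) := by
        rw [hσv x hxβ, abs_mul, abs_of_pos (hpos x hxβ)]
        calc |(m * h x - m * x * h' x) / h x ^ 2| * h x ≤ (4 * L0 / η0 ^ 2 * A) * (L0 * x) :=
            mul_le_mul (hFb x hx) (P4 x hx) (hpos x hxβ).le
              (mul_nonneg (div_nonneg (by linarith) (by positivity)) hA0)
          _ = 4 * L0 ^ 2 / η0 ^ 2 * (A * x) := by ring
      have u1 : |((-(m * x * h'' x) * h x - (m * h x - m * x * h' x) * (2 * h' x)) / h x ^ 3 * h x +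
          deriv (sigmaFun h m) x * h' x) * (h' x / Real.sqrt (1 + h' x ^ 2))| ≤
          26 * L0 ^ 2 / η0 ^ 2 * A + 12 * L0 ^ 2 / η0 ^ 2 * A := by
        rw [abs_mul]
        calc _ ≤ |(-(m * x * h'' x) * h x - (m * h x - m * x * h' x) * (2 * h' x)) / h x ^ 3 * h x +
            deriv (sigmaFun h m) x * h' x| * 1 :=
            mul_le_mul_of_nonneg_left (abs_phi_le_one _) (abs_nonneg _)
          _ = |(-(m * x * h'' x) * h x - (m * h x - m * x * h' x) * (2 * h' x)) / h x ^ 3 * h x +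
            deriv (sigmaFun h m) x * h' x| := mul_one _
          _ ≤ 26 * L0 ^ 2 / η0 ^ 2 * A + 12 * L0 ^ 2 / η0 ^ 2 * A :=
            (abs_add_le _ _).trans (add_le_add t1 t2)
      have u2 : |deriv (sigmaFun h m) x * h x * (1 / Real.sqrt (1 + h' x ^ 2) ^ 3 * h'' x)| ≤
          (4 * L0 ^ 2 / η0 ^ 2 * (A * x)) * A := by
        rw [abs_mul]
        exact mul_le_mul t3 (keyΦb x hx) (abs_nonneg _) ((abs_nonneg _).trans t3)
      have c38 : 38 * L0 ^ 2 / η0 ^ 2 ≤ K := hKgen _ (by nlinarith [hL0pos, sq_nonneg L0])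
      have c4 : 4 * L0 ^ 2 / η0 ^ 2 ≤ K := hKgen _ (by nlinarith [hL0pos, sq_nonneg L0])
      have s1 : (38 * L0 ^ 2 / η0 ^ 2) * A ≤ K * A := mul_le_mul_of_nonneg_right c38 hA0
      have s2 : (4 * L0 ^ 2 / η0 ^ 2) * ((A * x) * A) ≤ K * ((A * x) * A) :=
        mul_le_mul_of_nonneg_right c4
          (mul_nonneg (mul_nonneg hA0 hx.1.le) hA0)
      calc |_ + _| ≤ _ := abs_add_le _ _
        _ ≤ (26 * L0 ^ 2 / η0 ^ 2 * A + 12 * L0 ^ 2 / η0 ^ 2 * A) +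
            (4 * L0 ^ 2 / η0 ^ 2 * (A * x)) * A := add_le_add u1 u2
        _ ≤ K * A + K * A * (x * A) := by ring_nf at s1 s2 ⊢; linarith [s1, s2]
  -- ω₄
  · constructor
    · intro x hx
      refine final1 x hx _ ?_
      have e : omega4 h h' m x = (sigmaFun h m x - 1) * (h' x / Real.sqrt (1 + h' x ^ 2)) := rfl
      rw [e, abs_mul]
      calc |sigmaFun h m x - 1| * |h' x / Real.sqrt (1 + h' x ^ 2)| ≤ (A / η0 * x) * 1 :=
          mul_le_mul (hσ1 x hx) (abs_phi_le_one _) (abs_nonneg _)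
            (mul_nonneg (div_nonneg hA0 hη0.le) hx.1.le)
        _ = (1 / η0) * (A * x) := by ring
        _ ≤ K * (A * x) := mul_le_mul_of_nonneg_right hK1η (mul_nonneg hA0 hx.1.le)
    · intro x hx
      have hxβ := hIoosub hx
      have hd : HasDerivAt (omega4 h h' m)
          ((m * h x - m * x * h' x) / h x ^ 2 * (h' x / Real.sqrt (1 + h' x ^ 2)) +
            (sigmaFun h m x - 1) * (1 / Real.sqrt (1 + h' x ^ 2) ^ 3 * h'' x)) x :=
        ((hσd x hxβ).sub_const 1).mul (keyΦ x hx)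
      rw [hd.deriv]
      refine final2 x hx _ ?_
      have u1 : |(m * h x - m * x * h' x) / h x ^ 2 * (h' x / Real.sqrt (1 + h' x ^ 2))| ≤
          4 * L0 / η0 ^ 2 * A := by
        rw [abs_mul]
        calc |(m * h x - m * x * h' x) / h x ^ 2| * |h' x / Real.sqrt (1 + h' x ^ 2)| ≤
            (4 * L0 / η0 ^ 2 * A) * 1 := mul_le_mul (hFb x hx) (abs_phi_le_one _) (abs_nonneg _)
              (mul_nonneg (div_nonneg (by linarith) (by positivity)) hA0)
          _ = 4 * L0 / η0 ^ 2 * A := mul_one _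
      have u2 : |(sigmaFun h m x - 1) * (1 / Real.sqrt (1 + h' x ^ 2) ^ 3 * h'' x)| ≤
          (A / η0 * x) * A := by
        rw [abs_mul]
        exact mul_le_mul (hσ1 x hx) (keyΦb x hx) (abs_nonneg _)
          (mul_nonneg (div_nonneg hA0 hη0.le) hx.1.le)
      have c1 : 4 * L0 / η0 ^ 2 ≤ K := hKgen _ (by nlinarith [hL0pos, sq_nonneg L0])
      have s1 : (4 * L0 / η0 ^ 2) * A ≤ K * A := mul_le_mul_of_nonneg_right c1 hA0
      have s2 : (1 / η0) * ((A * x) * A) ≤ K * ((A * x) * A) :=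
        mul_le_mul_of_nonneg_right hK1η (mul_nonneg (mul_nonneg hA0 hx.1.le) hA0)
      calc |_ + _| ≤ _ := abs_add_le _ _
        _ ≤ 4 * L0 / η0 ^ 2 * A + (A / η0 * x) * A := add_le_add u1 u2
        _ ≤ K * A + K * A * (x * A) := by ring_nf at s1 s2 ⊢; linarith [s1, s2]
  -- ω₅
  · constructor
    · intro x hx
      have hxβ := hIoosub hx
      refine final1 x hx _ ?_
      have e : omega5 h h' m x = (m * h x - m * x * h' x) / h x ^ 2 * h x *
          (1 / Real.sqrt (1 + h' x ^ 2)) := by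
        rw [omega5, hσv x hxβ]
      rw [e]
      have hhb : |h x| ≤ L0 * x := by
        rw [abs_of_pos (hpos x hxβ)]; exact P4 x hx
      calc |(m * h x - m * x * h' x) / h x ^ 2 * h x * (1 / Real.sqrt (1 + h' x ^ 2))|
          ≤ (4 * L0 / η0 ^ 2 * A) * (L0 * x) * 1 :=
            abs_mul3_le (hFb x hx) hhb (abs_psi_le_one _)
        _ = (4 * L0 * L0 / η0 ^ 2) * (A * x) := by ring
        _ ≤ K * (A * x) := mul_le_mul_of_nonneg_right
            (by
              have : (4 : ℝ) * L0 * L0 ≤ 100 * L0 ^ 2 := by nlinarith [hL0pos]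
              calc 4 * L0 * L0 / η0 ^ 2 ≤ (100 * L0 ^ 2) / η0 ^ 2 :=
                  (div_le_div_iff_of_pos_right (pow_pos hη0 2)).2 this
                _ ≤ K := hKgen _ le_rfl)
            (mul_nonneg hA0 hx.1.le)
    · intro x hx
      have hxβ := hIoosub hx
      have hd : HasDerivAt (omega5 h h' m)
          (((-(m * x * h'' x) * h x - (m * h x - m * x * h' x) * (2 * h' x)) / h x ^ 3 * h x +
            deriv (sigmaFun h m) x * h' x) * (1 / Real.sqrt (1 + h' x ^ 2)) +
            deriv (sigmaFun h m) x * h x * (-(h' x / Real.sqrt (1 + h' x ^ 2) ^ 3) * h'' x)) x :=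
        ((hσd2 x hx).mul (hdAt x hxβ)).mul (keyΨ x hx)
      rw [hd.deriv]
      refine final2 x hx _ ?_
      have t1 := hGhb x hx
      have t2 : |deriv (sigmaFun h m) x * h' x| ≤ 12 * L0 ^ 2 / η0 ^ 2 * A := by
        rw [hσv x hxβ, abs_mul]
        calc |(m * h x - m * x * h' x) / h x ^ 2| * |h' x| ≤ (4 * L0 / η0 ^ 2 * A) * (3 * L0) :=
            mul_le_mul (hFb x hx) (P5 x hx) (abs_nonneg _)
              (mul_nonneg (div_nonneg (by linarith) (by positivity)) hA0)
          _ = 12 * L0 ^ 2 / η0 ^ 2 * A := by ring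
      have t3 : |deriv (sigmaFun h m) x * h x| ≤ 4 * L0 ^ 2 / η0 ^ 2 * (A * x) := by
        rw [hσv x hxβ, abs_mul, abs_of_pos (hpos x hxβ)]
        calc |(m * h x - m * x * h' x) / h x ^ 2| * h x ≤ (4 * L0 / η0 ^ 2 * A) * (L0 * x) :=
            mul_le_mul (hFb x hx) (P4 x hx) (hpos x hxβ).le
              (mul_nonneg (div_nonneg (by linarith) (by positivity)) hA0)
          _ = 4 * L0 ^ 2 / η0 ^ 2 * (A * x) := by ring
      have u1 : |((-(m * x * h'' x) * h x - (m * h x - m * x * h' x) * (2 * h' x)) / h x ^ 3 * h x +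
          deriv (sigmaFun h m) x * h' x) * (1 / Real.sqrt (1 + h' x ^ 2))| ≤
          26 * L0 ^ 2 / η0 ^ 2 * A + 12 * L0 ^ 2 / η0 ^ 2 * A := by
        rw [abs_mul]
        calc _ ≤ |(-(m * x * h'' x) * h x - (m * h x - m * x * h' x) * (2 * h' x)) / h x ^ 3 * h x +
            deriv (sigmaFun h m) x * h' x| * 1 :=
            mul_le_mul_of_nonneg_left (abs_psi_le_one _) (abs_nonneg _)
          _ = |(-(m * x * h'' x) * h x - (m * h x - m * x * h' x) * (2 * h' x)) / h x ^ 3 * h x +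
            deriv (sigmaFun h m) x * h' x| := mul_one _
          _ ≤ 26 * L0 ^ 2 / η0 ^ 2 * A + 12 * L0 ^ 2 / η0 ^ 2 * A :=
            (abs_add_le _ _).trans (add_le_add t1 t2)
      have u2 : |deriv (sigmaFun h m) x * h x * (-(h' x / Real.sqrt (1 + h' x ^ 2) ^ 3) * h'' x)| ≤
          (4 * L0 ^ 2 / η0 ^ 2 * (A * x)) * A := by
        rw [abs_mul]
        exact mul_le_mul t3 (keyΨb x hx) (abs_nonneg _) ((abs_nonneg _).trans t3)
      have c38 : 38 * L0 ^ 2 / η0 ^ 2 ≤ K := hKgen _ (by nlinarith [hL0pos, sq_nonneg L0])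
      have c4 : 4 * L0 ^ 2 / η0 ^ 2 ≤ K := hKgen _ (by nlinarith [hL0pos, sq_nonneg L0])
      have s1 : (38 * L0 ^ 2 / η0 ^ 2) * A ≤ K * A := mul_le_mul_of_nonneg_right c38 hA0
      have s2 : (4 * L0 ^ 2 / η0 ^ 2) * ((A * x) * A) ≤ K * ((A * x) * A) :=
        mul_le_mul_of_nonneg_right c4
          (mul_nonneg (mul_nonneg hA0 hx.1.le) hA0)
      calc |_ + _| ≤ _ := abs_add_le _ _
        _ ≤ (26 * L0 ^ 2 / η0 ^ 2 * A + 12 * L0 ^ 2 / η0 ^ 2 * A) +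
            (4 * L0 ^ 2 / η0 ^ 2 * (A * x)) * A := add_le_add u1 u2
        _ ≤ K * A + K * A * (x * A) := by ring_nf at s1 s2 ⊢; linarith [s1, s2]
  -- ω₆
  · constructor
    · intro x hx
      refine final1 x hx _ ?_
      have e : omega6 h h' m x = (sigmaFun h m x - 1) * (1 / Real.sqrt (1 + h' x ^ 2)) := rfl
      rw [e, abs_mul]
      calc |sigmaFun h m x - 1| * |1 / Real.sqrt (1 + h' x ^ 2)| ≤ (A / η0 * x) * 1 :=
          mul_le_mul (hσ1 x hx) (abs_psi_le_one _) (abs_nonneg _)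
            (mul_nonneg (div_nonneg hA0 hη0.le) hx.1.le)
        _ = (1 / η0) * (A * x) := by ring
        _ ≤ K * (A * x) := mul_le_mul_of_nonneg_right hK1η (mul_nonneg hA0 hx.1.le)
    · intro x hx
      have hxβ := hIoosub hx
      have hd : HasDerivAt (omega6 h h' m)
          ((m * h x - m * x * h' x) / h x ^ 2 * (1 / Real.sqrt (1 + h' x ^ 2)) +
            (sigmaFun h m x - 1) * (-(h' x / Real.sqrt (1 + h' x ^ 2) ^ 3) * h'' x)) x :=
        ((hσd x hxβ).sub_const 1).mul (keyΨ x hx)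
      rw [hd.deriv]
      refine final2 x hx _ ?_
      have u1 : |(m * h x - m * x * h' x) / h x ^ 2 * (1 / Real.sqrt (1 + h' x ^ 2))| ≤
          4 * L0 / η0 ^ 2 * A := by
        rw [abs_mul]
        calc |(m * h x - m * x * h' x) / h x ^ 2| * |1 / Real.sqrt (1 + h' x ^ 2)| ≤
            (4 * L0 / η0 ^ 2 * A) * 1 := mul_le_mul (hFb x hx) (abs_psi_le_one _) (abs_nonneg _)
              (mul_nonneg (div_nonneg (by linarith) (by positivity)) hA0)
          _ = 4 * L0 / η0 ^ 2 * A := mul_one _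
      have u2 : |(sigmaFun h m x - 1) * (-(h' x / Real.sqrt (1 + h' x ^ 2) ^ 3) * h'' x)| ≤
          (A / η0 * x) * A := by
        rw [abs_mul]
        exact mul_le_mul (hσ1 x hx) (keyΨb x hx) (abs_nonneg _)
          (mul_nonneg (div_nonneg hA0 hη0.le) hx.1.le)
      have c1 : 4 * L0 / η0 ^ 2 ≤ K := hKgen _ (by nlinarith [hL0pos, sq_nonneg L0])
      have s1 : (4 * L0 / η0 ^ 2) * A ≤ K * A := mul_le_mul_of_nonneg_right c1 hA0
      have s2 : (1 / η0) * ((A * x) * A) ≤ K * ((A * x) * A) :=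
        mul_le_mul_of_nonneg_right hK1η (mul_nonneg (mul_nonneg hA0 hx.1.le) hA0)
      calc |_ + _| ≤ _ := abs_add_le _ _
        _ ≤ 4 * L0 / η0 ^ 2 * A + (A / η0 * x) * A := add_le_add u1 u2
        _ ≤ K * A + K * A * (x * A) := by ring_nf at s1 s2 ⊢; linarith [s1, s2]
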